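/- Let f : D ⊆ ℝ^m → ℝ^n be C¹ with g = f_{1:r} a submersion on D, and let u ⊆ D be a compact box (product of closed intervals with nonempty interior) in ℝ^m. Let Y ⊆ ℝ^r be a nonempty box. If (i) Y ∩ g(∂u) = ∅, and (ii) there exists ũ ∈ u with g(ũ) ∈ Y, then Y ⊆ g(u). -/

import Mathlib

/-- Inner inclusion criterion: if `g = f_{1:r}` is a submersion on `D`, `u ⊆ D` is a
compact box with nonempty interior, `Y` is a nonempty box with `Y ∩ g(∂u) = ∅` and
`g(u0) ∈ Y` for some `u0 ∈ u`, then `Y ⊆ g(u)`. -/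
theorem box_subset_image_of_boundary_disjoint {m n r : ℕ} (hrn : r ≤ n)
    (D : Set (Fin m → ℝ)) (hD : IsOpen D)
    (f : (Fin m → ℝ) → (Fin n → ℝ)) (hf : ContDiffOn ℝ 1 f D)
    (g : (Fin m → ℝ) → (Fin r → ℝ))
    (hg : ∀ x, g x = fun i => f x (Fin.castLE hrn i))
    (hrank : ∀ x ∈ D, Function.Surjective (fderiv ℝ g x))
    (a b : Fin m → ℝ) (hab : ∀ i, a i < b i)
    (u : Set (Fin m → ℝ)) (hu : u = Set.univ.pi fun i => Set.Icc (a i) (b i))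
    (huD : u ⊆ D)
    (c d : Fin r → ℝ) (hcd : ∀ i, c i ≤ d i)
    (Y : Set (Fin r → ℝ)) (hY : Y = Set.univ.pi fun i => Set.Icc (c i) (d i))
    (hdisj : Y ∩ g '' (frontier u) = ∅)
    (hmem : ∃ u0 ∈ u, g u0 ∈ Y) :
    Y ⊆ g '' u := by
  classical
  obtain ⟨u0, hu0, hgu0⟩ := hmem
  set C := g '' u with hC
  have hgf : g = (ContinuousLinearMap.pi fun i : Fin r =>
      ContinuousLinearMap.proj (R := ℝ) (φ := fun _ : Fin n => ℝ) (Fin.castLE hrn i)) ∘ f := by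
    funext x
    simpa using hg x
  have hgD : ContDiffOn ℝ 1 g D := by
    rw [hgf]
    exact (ContinuousLinearMap.contDiff _).comp_contDiffOn hf
  have hucpt : IsCompact u := by
    rw [hu]; exact isCompact_univ_pi fun i => isCompact_Icc
  have huclosed : IsClosed u := hucpt.isClosed
  have hCcpt : IsCompact C := hucpt.image_of_continuousOn (hgD.continuousOn.mono huD)
  have hCclosed : IsClosed C := hCcpt.isClosed
  have hkey : ∀ y ∈ Y ∩ C, y ∈ interior C := by
    rintro y ⟨hyY, x, hxu, rfl⟩
    have hxD : x ∈ D := huD hxu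
    have hxint : x ∈ interior u := by
      by_contra hxint
      have hxf : x ∈ frontier u := by
        rw [huclosed.frontier_eq]
        exact ⟨hxu, hxint⟩
      have : g x ∈ Y ∩ g '' frontier u := ⟨hyY, ⟨x, hxf, rfl⟩⟩
      rw [hdisj] at this
      exact this
    have hstrict : HasStrictFDerivAt g (fderiv ℝ g x) x :=
      ((hgD x hxD).contDiffAt (hD.mem_nhds hxD)).hasStrictFDerivAt one_ne_zero
    have hmap := hstrict.map_nhds_eq_of_surj (LinearMap.range_eq_top.2 (hrank x hxD))
    have hmemC : C ∈ nhds (g x) := by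
      rw [← hmap]
      exact Filter.image_mem_map (mem_interior_iff_mem_nhds.1 hxint)
    exact mem_interior_iff_mem_nhds.2 hmemC
  have hYconn : IsPreconnected Y := by
    rw [hY]
    exact (convex_pi fun i _ => convex_Icc (c i) (d i)).isPreconnected
  intro y hy
  by_contra hyC
  have hcover : Y ⊆ interior C ∪ Cᶜ := by
    intro z hz
    by_cases hzC : z ∈ C
    · exact Or.inl (hkey z ⟨hz, hzC⟩)
    · exact Or.inr hzC
  have hne1 : (Y ∩ interior C).Nonempty :=
    ⟨g u0, hgu0, hkey _ ⟨hgu0, ⟨u0, hu0, rfl⟩⟩⟩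
  have hne2 : (Y ∩ Cᶜ).Nonempty := ⟨y, hy, hyC⟩
  obtain ⟨z, _, hz1, hz2⟩ :=
    hYconn (interior C) Cᶜ isOpen_interior hCclosed.isOpen_compl hcover hne1 hne2
  exact hz2 (interior_subset hz1)
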